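/- arXiv:math/0203162 — 2 statements merged into one kernel-verified Lean document; each statement's English description precedes it below -/
import Mathlib

section
/- Let K ⊂ ℝ² be a convex body with boundary Γ, let α > 0 and x ∈ ℝ² with x ≠ 0. If Γ ∩ (αΓ + x) contains three distinct points, then at least one of these points lies on a (nondegenerate) line segment contained in Γ. -/
lemma plane_norm {w : ℝ × ℝ} (hw : w ≠ 0) : 0 < w.1^2 + w.2^2 := by
  rcases em (w.1 = 0) with h | h
  · have h2 : w.2 ≠ 0 := fun h2 => hw (Prod.ext h h2)
    positivity
  · positivity

lemma plane1 {w z : ℝ × ℝ} (hw : w ≠ 0) (h1 : w.1*z.1 + w.2*z.2 = 0)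
    (h2 : -w.2*z.1 + w.1*z.2 = 0) : z = 0 := by
  have hw2 := plane_norm hw
  have e1 : (w.1^2 + w.2^2) * z.1 = 0 := by linear_combination w.1 * h1 - w.2 * h2
  have e2 : (w.1^2 + w.2^2) * z.2 = 0 := by linear_combination w.2 * h1 + w.1 * h2
  have z1 : z.1 = 0 := by rcases mul_eq_zero.1 e1 with h | h; exacts [absurd h hw2.ne', h]
  have z2 : z.2 = 0 := by rcases mul_eq_zero.1 e2 with h | h; exacts [absurd h hw2.ne', h]
  exact Prod.ext z1 z2

lemma plane2 {w z : ℝ × ℝ} (hw : w ≠ 0) (h2 : -w.2*z.1 + w.1*z.2 = 0) :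
    ∃ t : ℝ, z = t • w := by
  refine ⟨(w.1*z.1 + w.2*z.2)/(w.1^2+w.2^2), ?_⟩
  have hw2 := plane_norm hw
  have hne := hw2.ne'
  apply Prod.ext
  · simp only [Prod.smul_def, smul_eq_mul]
    field_simp
    linear_combination (-w.2) * h2
  · simp only [Prod.smul_def, smul_eq_mul]
    field_simp
    linear_combination w.1 * h2



lemma lemS {K : Set (ℝ × ℝ)} (hK : Convex ℝ K) {a b P : ℝ × ℝ}
    (ha : a ∈ K) (hb : b ∈ K) (hP : P ∈ frontier K)
    (hseg : P ∈ openSegment ℝ a b) : segment ℝ a b ⊆ frontier K := by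
  have hPni : P ∉ interior K := hP.2
  rcases eq_or_ne a b with rfl | hab
  · rw [openSegment_same, Set.mem_singleton_iff] at hseg
    rw [segment_same]
    intro q hq
    rw [Set.mem_singleton_iff] at hq
    rw [hq, ← hseg]
    exact hP
  rw [openSegment_eq_image'] at hseg
  obtain ⟨θ, hθ, hPθ⟩ := hseg
  simp only [Set.mem_Ioo] at hθ
  dsimp only at hPθ
  intro q hq
  rw [segment_eq_image'] at hq
  obtain ⟨σ, hσ, hqσ⟩ := hq
  simp only [Set.mem_Icc] at hσ
  dsimp only at hqσ
  constructor
  · exact subset_closure (hK.segment_subset ha hb (by rw [segment_eq_image']; exact ⟨σ, ⟨hσ.1, hσ.2⟩, hqσ⟩))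
  · intro hqint
    apply hPni
    rcases lt_trichotomy σ θ with hlt | heq | hgt
    · have h1σ : (0:ℝ) < 1 - σ := by linarith [hθ.2]
      have hP' : P ∈ openSegment ℝ q b := by
        rw [openSegment_eq_image']
        refine ⟨(θ - σ)/(1 - σ), ⟨div_pos (by linarith) h1σ, ?_⟩, ?_⟩
        · rw [div_lt_one h1σ]; linarith [hθ.2]
        · dsimp only
          rw [← hPθ, ← hqσ]
          match_scalars <;> field_simp <;> ring
      exact hK.openSegment_interior_closure_subset_interior hqint (subset_closure hb) hP'
    · have hqP : q = P := by rw [← hqσ, ← hPθ, heq]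
      rw [← hqP]
      exact hqint
    · have hσ0 : (0:ℝ) < σ := lt_of_le_of_lt (le_of_lt hθ.1) hgt
      have hP' : P ∈ openSegment ℝ q a := by
        rw [openSegment_eq_image']
        refine ⟨(σ - θ)/σ, ⟨div_pos (by linarith) hσ0, ?_⟩, ?_⟩
        · rw [div_lt_one hσ0]; linarith [hθ.1]
        · dsimp only
          rw [← hPθ, ← hqσ]
          match_scalars <;> field_simp <;> ring
      exact hK.openSegment_interior_closure_subset_interior hqint (subset_closure ha) hP'



lemma lemEXTRA {K : Set (ℝ × ℝ)} (hK : Convex ℝ K) {P Q z : ℝ × ℝ}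
    (hPQ : P ≠ Q) (hPf : P ∈ frontier K) (hQf : Q ∈ frontier K)
    (hPK : P ∈ K) (hQK : Q ∈ K) (hz : z ∈ K) {t : ℝ}
    (hzt : z = P + t • (Q - P)) (ht : t ∉ Set.Icc (0:ℝ) 1) :
    ∃ A B : ℝ × ℝ, A ≠ B ∧ P ∈ segment ℝ A B ∧ segment ℝ A B ⊆ frontier K := by
  simp only [Set.mem_Icc, not_and_or, not_le] at ht
  rcases ht with ht | ht
  · -- t < 0 : P ∈ openSegment z Q
    have h1t : (0:ℝ) < 1 - t := by linarith
    have hzQ : z ≠ Q := by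
      intro h
      rw [hzt] at h
      have h2 : (1 - t) • (P - Q) = (P + t • (Q - P)) - Q := by module
      rw [h, sub_self] at h2
      rcases smul_eq_zero.1 h2 with h' | h'
      · linarith
      · exact hPQ (sub_eq_zero.1 h')
    have hseg : P ∈ openSegment ℝ z Q := by
      rw [openSegment_eq_image']
      refine ⟨-t/(1-t), ⟨div_pos (by linarith) h1t, ?_⟩, ?_⟩
      · rw [div_lt_one h1t]; linarith
      · dsimp only
        rw [hzt]
        match_scalars <;> field_simp <;> ring
    have hsub := lemS hK hz hQK hPf hseg
    exact ⟨z, Q, hzQ, openSegment_subset_segment ℝ z Q hseg, hsub⟩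
  · -- 1 < t : Q ∈ openSegment P z
    have ht0 : (0:ℝ) < t := by linarith
    have hPz : P ≠ z := by
      intro h
      rw [hzt] at h
      have h2 : t • (Q - P) = (P + t • (Q - P)) - P := by module
      rw [← h, sub_self] at h2
      rcases smul_eq_zero.1 h2 with h' | h'
      · linarith
      · exact hPQ (sub_eq_zero.1 h').symm
    have hseg : Q ∈ openSegment ℝ P z := by
      rw [openSegment_eq_image']
      refine ⟨1/t, ⟨by positivity, ?_⟩, ?_⟩
      · rw [div_lt_one ht0]; linarith
      · dsimp only
        rw [hzt]
        match_scalars <;> field_simp <;> ring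
    have hsub := lemS hK hPK hz hQf hseg
    exact ⟨P, z, hPz, left_mem_segment ℝ P z, hsub⟩



lemma param_unique {P d : ℝ × ℝ} (hd : d ≠ 0) {s t : ℝ}
    (h : P + s • d = P + t • d) : s = t := by
  have h2 : (s - t) • d = 0 := by
    rw [sub_smul, add_left_cancel h, sub_self]
  rcases smul_eq_zero.1 h2 with h' | h'
  · have := sub_eq_zero.1 (by linarith [h'] : s - t = 0)
    exact this
  · exact absurd h' hd

lemma lemFINISH {K : Set (ℝ × ℝ)} (hK : Convex ℝ K) {α : ℝ} (hα : 0 < α)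
    {x Pi Pj Pk Qi Qj Qk : ℝ × ℝ}
    (hQi : Pi = α • Qi + x) (hQj : Pj = α • Qj + x) (hQk : Pk = α • Qk + x)
    (hPiK : Pi ∈ K) (hPkK : Pk ∈ K) (hQiK : Qi ∈ K) (hQkK : Qk ∈ K)
    (hPjf : Pj ∈ frontier K) (hPQj : Pj ≠ Qj)
    (hline : ∀ z ∈ K, (∃ t : ℝ, z = Pj + t • (Qj - Pj)) → z ∈ segment ℝ Pj Qj)
    (hik : Pi ≠ Pk) {μ : ℝ} (hμ0 : 0 < μ) (hμ1 : μ < 1)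
    (hm : ∃ t : ℝ, μ • Pi + (1-μ) • Pk = Pj + t • (Qj - Pj)) :
    ∃ A B : ℝ × ℝ, A ≠ B ∧ Pj ∈ segment ℝ A B ∧ segment ℝ A B ⊆ frontier K := by
  have hα' : α ≠ 0 := hα.ne'
  set m := μ • Pi + (1-μ) • Pk with hmdef
  set m' := μ • Qi + (1-μ) • Qk with hm'def
  have hd : Qj - Pj ≠ 0 := fun h => hPQj (sub_eq_zero.1 h).symm
  have hmK : m ∈ K := hK hPiK hPkK hμ0.le (by linarith) (by ring)
  have hm'K : m' ∈ K := hK hQiK hQkK hμ0.le (by linarith) (by ring)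
  obtain ⟨t, hmt⟩ := hm
  -- m' is on the line too : m' = Pj + (1 + t/α) • (Qj - Pj)
  have hm'line : m' = Pj + (1 + t/α) • (Qj - Pj) := by
    have key : α • m' = α • (Pj + (1 + t/α) • (Qj - Pj)) := by
      have h1 : α • m' = m - x := by
        rw [hmdef, hm'def, hQi, hQk]; match_scalars <;> ring
      rw [h1, hmt, hQj]
      match_scalars <;> field_simp <;> ring
    exact smul_right_injective (ℝ × ℝ) hα' key
  -- both in segment
  have hms : m ∈ segment ℝ Pj Qj := hline m hmK ⟨t, hmt⟩
  have hm's : m' ∈ segment ℝ Pj Qj := hline m' hm'K ⟨1 + t/α, hm'line⟩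
  rw [segment_eq_image'] at hms hm's
  obtain ⟨s, hs, hmsr⟩ := hms
  obtain ⟨s', hs', hm'sr⟩ := hm's
  simp only [Set.mem_Icc] at hs hs'
  dsimp only at hmsr hm'sr
  have ht1 : t = s := param_unique hd (hmt ▸ hmsr.symm)
  have ht2 : 1 + t/α = s' := param_unique hd (hm'line ▸ hm'sr.symm)
  have ht0 : t = 0 := by
    have h1 : t/α ≤ 0 := by linarith [hs'.2]
    have h2 : t ≤ 0 := by
      by_contra h
      push_neg at h
      have : 0 < t/α := div_pos h hα
      linarith
    linarith [hs.1]
  have hmPj : Pj = m := by rw [hmt, ht0, zero_smul, add_zero]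
  have hseg : Pj ∈ openSegment ℝ Pi Pk :=
    ⟨μ, 1-μ, hμ0, by linarith, by ring, hmPj.symm⟩
  exact ⟨Pi, Pk, hik, openSegment_subset_segment ℝ Pi Pk hseg, lemS hK hPiK hPkK hPjf hseg⟩



lemma lemNEQ {K : Set (ℝ × ℝ)} (hK : Convex ℝ K) {α : ℝ} (hα : 0 < α)
    {x Pa Pb Qb : ℝ × ℝ} (hx : x ≠ 0)
    (ha : Pa = α • Pa + x) (hb : Pb = α • Qb + x) (hab : Pa ≠ Pb)
    (haK : Pa ∈ K) (hbK : Pb ∈ K) (hQbK : Qb ∈ K)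
    (hbf : Pb ∈ frontier K) (hQbf : Qb ∈ frontier K) :
    ∃ A B : ℝ × ℝ, A ≠ B ∧ Pb ∈ segment ℝ A B ∧ segment ℝ A B ⊆ frontier K := by
  have hα1 : α ≠ 1 := by
    intro h
    rw [h, one_smul] at ha
    exact hx (left_eq_add.1 ha)
  have hα1' : α - 1 ≠ 0 := sub_ne_zero.2 hα1
  have hne : Pb ≠ Qb := by
    intro h
    apply hab
    rw [h] at hb
    have h3 : (1 - α) • (Pa - Qb) = 0 := by
      linear_combination (norm := module) ha - hb
    rcases smul_eq_zero.1 h3 with h' | h'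
    · exact absurd (by linarith : α = 1) hα1
    · rw [h, sub_eq_zero.1 h']
  have hzt : Pa = Pb + (α/(α-1)) • (Qb - Pb) := by
    linear_combination (norm := (match_scalars <;> (field_simp; try ring))) (-(1:ℝ)/(α-1)) • ha + ((1:ℝ)/(α-1)) • hb
  have ht : α/(α-1) ∉ Set.Icc (0:ℝ) 1 := by
    simp only [Set.mem_Icc, not_and_or, not_le]
    rcases lt_or_gt_of_ne hα1 with h | h
    · left
      exact div_neg_of_pos_of_neg hα (by linarith)
    · right
      rw [lt_div_iff₀ (by linarith : (0:ℝ) < α - 1)]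
      linarith
  exact lemEXTRA hK hne hbf hQbf hbK hQbK haK hzt ht



/-- Let `K ⊆ ℝ²` be a convex body with boundary `Γ`, `α > 0`, `x ≠ 0`.
If `Γ ∩ (αΓ + x)` contains three distinct points, then at least one of them
lies on a nondegenerate line segment contained in `Γ`. -/
theorem stmt_5 (K : Set (ℝ × ℝ)) (hK : Convex ℝ K) (hcomp : IsCompact K)
    (hint : (interior K).Nonempty) (α : ℝ) (hα : 0 < α) (x : ℝ × ℝ) (hx : x ≠ 0)
    (P₁ P₂ P₃ : ℝ × ℝ) (h12 : P₁ ≠ P₂) (h13 : P₁ ≠ P₃) (h23 : P₂ ≠ P₃)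
    (hmem : ∀ P ∈ ({P₁, P₂, P₃} : Set (ℝ × ℝ)),
      P ∈ frontier K ∩ ((fun y => α • y + x) '' frontier K)) :
    ∃ P ∈ ({P₁, P₂, P₃} : Set (ℝ × ℝ)), ∃ A B : ℝ × ℝ, A ≠ B ∧
      P ∈ segment ℝ A B ∧ segment ℝ A B ⊆ frontier K := by
  classical
  have hcl : IsClosed K := hcomp.isClosed
  have hfr : frontier K ⊆ K := hcl.frontier_subset
  obtain ⟨hP1f, Q₁, hQ1f, hQ1⟩ := hmem P₁ (by simp)
  obtain ⟨hP2f, Q₂, hQ2f, hQ2⟩ := hmem P₂ (by simp)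
  obtain ⟨hP3f, Q₃, hQ3f, hQ3⟩ := hmem P₃ (by simp)
  replace hQ1 : P₁ = α • Q₁ + x := hQ1.symm
  replace hQ2 : P₂ = α • Q₂ + x := hQ2.symm
  replace hQ3 : P₃ = α • Q₃ + x := hQ3.symm
  have hP1K : P₁ ∈ K := hfr hP1f
  have hP2K : P₂ ∈ K := hfr hP2f
  have hP3K : P₃ ∈ K := hfr hP3f
  have hQ1K : Q₁ ∈ K := hfr hQ1f
  have hQ2K : Q₂ ∈ K := hfr hQ2f
  have hQ3K : Q₃ ∈ K := hfr hQ3f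
  by_contra hcon
  have hgoal : ∀ P ∈ ({P₁, P₂, P₃} : Set (ℝ × ℝ)),
      (∃ A B : ℝ × ℝ, A ≠ B ∧ P ∈ segment ℝ A B ∧ segment ℝ A B ⊆ frontier K) → False :=
    fun P hP h => hcon ⟨P, hP, h⟩
  have hne1 : P₁ ≠ Q₁ := by
    intro h
    rw [← h] at hQ1
    exact hgoal P₂ (by simp) (lemNEQ hK hα hx hQ1 hQ2 h12 hP1K hP2K hQ2K hP2f hQ2f)
  have hne2 : P₂ ≠ Q₂ := by
    intro h
    rw [← h] at hQ2
    exact hgoal P₁ (by simp) (lemNEQ hK hα hx hQ2 hQ1 h12.symm hP2K hP1K hQ1K hP1f hQ1f)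
  have hne3 : P₃ ≠ Q₃ := by
    intro h
    rw [← h] at hQ3
    exact hgoal P₁ (by simp) (lemNEQ hK hα hx hQ3 hQ1 h13.symm hP3K hP1K hQ1K hP1f hQ1f)
  have hlineGen : ∀ P Q : ℝ × ℝ, P ≠ Q → P ∈ frontier K → Q ∈ frontier K →
      P ∈ ({P₁, P₂, P₃} : Set (ℝ × ℝ)) →
      ∀ z ∈ K, (∃ t : ℝ, z = P + t • (Q - P)) → z ∈ segment ℝ P Q := by
    rintro P Q hPQ hPf hQf hPmem z hz ⟨t, hzt⟩
    by_contra hzs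
    have ht : t ∉ Set.Icc (0:ℝ) 1 := by
      intro htI
      exact hzs (by rw [segment_eq_image']; exact ⟨t, htI, hzt.symm⟩)
    exact hgoal P hPmem (lemEXTRA hK hPQ hPf hQf (hfr hPf) (hfr hQf) hz hzt ht)
  have hline1 := hlineGen P₁ Q₁ hne1 hP1f hQ1f (by simp)
  have hline2 := hlineGen P₂ Q₂ hne2 hP2f hQ2f (by simp)
  have hline3 := hlineGen P₃ Q₃ hne3 hP3f hQ3f (by simp)
  have paru : ∀ {P d : ℝ × ℝ}, d ≠ 0 → ∀ {s t : ℝ}, P + s • d = P + t • d → s = t := by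
    intro P d hd s t h
    have h2 : (s - t) • d = 0 := by rw [sub_smul, add_left_cancel h, sub_self]
    rcases smul_eq_zero.1 h2 with h' | h'
    · linarith [sub_eq_zero.1 (by linarith : s - t - 0 = 0)]
    · exact absurd h' hd
  have scal : ∀ a b c : ℝ, a < b → b < c →
      ((c - b)/(c - a)) * a + (1 - (c - b)/(c - a)) * c = b := by
    intro a b c ha hb
    have h0 : c - a ≠ 0 := ne_of_gt (by linarith)
    field_simp
    ring
  rcases eq_or_ne α 1 with hα1 | hα1
  · subst hα1
    simp only [one_smul] at hQ1 hQ2 hQ3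
    set tau : ℝ × ℝ → ℝ := fun P => -x.2*P.1 + x.1*P.2 with htau
    have hdist : ∀ Pa Qa Pb Qb : ℝ × ℝ, Pa = Qa + x → Pb = Qb + x →
        (∀ z ∈ K, (∃ t : ℝ, z = Pa + t • (Qa - Pa)) → z ∈ segment ℝ Pa Qa) →
        Pb ∈ K → Qb ∈ K → Pa ≠ Pb → tau Pa ≠ tau Pb := by
      intro Pa Qa Pb Qb ha hb hlinea hPbK hQbK hab heq
      have hQaPa : Qa - Pa = -x := by rw [ha]; abel
      have hd0 : Qa - Pa ≠ 0 := by rw [hQaPa]; simpa using hx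
      have hD : -x.2*(Pb-Pa).1 + x.1*(Pb-Pa).2 = 0 := by
        simp only [htau] at heq
        simp only [Prod.fst_sub, Prod.snd_sub]
        ring_nf
        ring_nf at heq
        linarith
      obtain ⟨s, hs⟩ := plane2 hx hD
      have hPb : Pb = Pa + (-s) • (Qa - Pa) := by
        rw [hQaPa, show Pb = Pa + s • x from by rw [← hs]; abel]
        module
      have h1 := hlinea Pb hPbK ⟨-s, hPb⟩
      rw [segment_eq_image'] at h1
      obtain ⟨u, hu, hu'⟩ := h1
      simp only [Set.mem_Icc] at hu
      dsimp only at hu'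
      have e1 : -s = u := paru hd0 (hPb.symm.trans hu'.symm)
      have hQb : Qb = Pa + (1-s) • (Qa - Pa) := by
        rw [hQaPa, show Qb = Pb - x from by rw [hb]; abel,
          show Pb = Pa + s • x from by rw [← hs]; abel]
        module
      have h2 := hlinea Qb hQbK ⟨1-s, hQb⟩
      rw [segment_eq_image'] at h2
      obtain ⟨u', hu2, hu2'⟩ := h2
      simp only [Set.mem_Icc] at hu2
      dsimp only at hu2'
      have e2 : 1-s = u' := paru hd0 (hQb.symm.trans hu2'.symm)
      have hs0 : s = 0 := by linarith [hu.1, hu.2, hu2.1, hu2.2]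
      apply hab
      rw [hPb, hs0]
      simp
    have hcore : ∀ Pi Qi Pj Qj Pk Qk : ℝ × ℝ,
        Pi = Qi + x → Pj = Qj + x → Pk = Qk + x →
        Pi ∈ K → Pk ∈ K → Qi ∈ K → Qk ∈ K → Pj ∈ frontier K → Pj ≠ Qj →
        (∀ z ∈ K, (∃ t : ℝ, z = Pj + t • (Qj - Pj)) → z ∈ segment ℝ Pj Qj) →
        tau Pi < tau Pj → tau Pj < tau Pk →
        (∃ A B : ℝ × ℝ, A ≠ B ∧ Pj ∈ segment ℝ A B ∧ segment ℝ A B ⊆ frontier K) := by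
      intro Pi Qi Pj Qj Pk Qk hi hj hk hPiK hPkK hQiK hQkK hPjf hPQj hlinej hij hjk
      have hik : tau Pi < tau Pk := lt_trans hij hjk
      set l := (tau Pk - tau Pj)/(tau Pk - tau Pi) with hldef
      have hl0 : 0 < l := div_pos (by linarith) (by linarith)
      have hl1 : l < 1 := by rw [hldef, div_lt_one (by linarith)]; linarith
      set m := l • Pi + (1-l) • Pk with hmdef
      have haff : tau m = l * tau Pi + (1-l) * tau Pk := by
        simp only [htau, hmdef, Prod.fst_add, Prod.snd_add, Prod.smul_fst, Prod.smul_snd,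
          smul_eq_mul]
        ring
      have hτm : tau m = tau Pj := by
        rw [haff, hldef]
        exact scal _ _ _ hij hjk
      have hD : -x.2*(m-Pj).1 + x.1*(m-Pj).2 = 0 := by
        simp only [htau] at hτm
        simp only [Prod.fst_sub, Prod.snd_sub]
        ring_nf
        ring_nf at hτm
        linarith
      obtain ⟨s, hs⟩ := plane2 hx hD
      have hQjPj : Qj - Pj = -x := by rw [hj]; abel
      have hm : ∃ t : ℝ, l • Pi + (1-l) • Pk = Pj + t • (Qj - Pj) := by
        refine ⟨-s, ?_⟩
        rw [hQjPj, show l • Pi + (1-l) • Pk = Pj + s • x from by rw [← hmdef, ← hs]; abel]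
        module
      have hikP : Pi ≠ Pk := by
        intro h
        rw [h] at hik
        exact lt_irrefl _ hik
      exact lemFINISH hK (by norm_num : (0:ℝ) < 1)
        (by rw [one_smul]; exact hi) (by rw [one_smul]; exact hj) (by rw [one_smul]; exact hk)
        hPiK hPkK hQiK hQkK hPjf hPQj hlinej hikP hl0 hl1 hm
    have hd12 := hdist P₁ Q₁ P₂ Q₂ hQ1 hQ2 hline1 hP2K hQ2K h12
    have hd13 := hdist P₁ Q₁ P₃ Q₃ hQ1 hQ3 hline1 hP3K hQ3K h13
    have hd23 := hdist P₂ Q₂ P₃ Q₃ hQ2 hQ3 hline2 hP3K hQ3K h23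
    rcases (lt_or_gt_of_ne hd12) with h12' | h12'
    · rcases (lt_or_gt_of_ne hd23) with h23' | h23'
      · exact hgoal P₂ (by simp) (hcore P₁ Q₁ P₂ Q₂ P₃ Q₃ hQ1 hQ2 hQ3 hP1K hP3K hQ1K hQ3K hP2f hne2 hline2 h12' h23')
      · rcases (lt_or_gt_of_ne hd13) with h13' | h13'
        · exact hgoal P₃ (by simp) (hcore P₁ Q₁ P₃ Q₃ P₂ Q₂ hQ1 hQ3 hQ2 hP1K hP2K hQ1K hQ2K hP3f hne3 hline3 h13' h23')
        · exact hgoal P₁ (by simp) (hcore P₃ Q₃ P₁ Q₁ P₂ Q₂ hQ3 hQ1 hQ2 hP3K hP2K hQ3K hQ2K hP1f hne1 hline1 h13' h12')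
    · rcases (lt_or_gt_of_ne hd13) with h13' | h13'
      · exact hgoal P₁ (by simp) (hcore P₂ Q₂ P₁ Q₁ P₃ Q₃ hQ2 hQ1 hQ3 hP2K hP3K hQ2K hQ3K hP1f hne1 hline1 h12' h13')
      · rcases (lt_or_gt_of_ne hd23) with h23' | h23'
        · exact hgoal P₃ (by simp) (hcore P₂ Q₂ P₃ Q₃ P₁ Q₁ hQ2 hQ3 hQ1 hP2K hP1K hQ2K hQ1K hP3f hne3 hline3 h23' h13')
        · exact hgoal P₂ (by simp) (hcore P₃ Q₃ P₂ Q₂ P₁ Q₁ hQ3 hQ2 hQ1 hP3K hP1K hQ3K hQ1K hP2f hne2 hline2 h23' h12')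
  · -- α ≠ 1 : homothety with center c
    have h1α : (1:ℝ) - α ≠ 0 := sub_ne_zero.2 (Ne.symm hα1)
    have hα0 : α ≠ 0 := hα.ne'
    have hinv1 : 1/α - 1 ≠ 0 := by
      intro h
      apply hα1
      field_simp at h
      linarith
    set c : ℝ × ℝ := (1/(1-α)) • x with hcdef
    have hcx : c = α • c + x := by
      rw [hcdef]
      match_scalars <;> (field_simp; try ring)
    have hRrel : ∀ Pa Qa : ℝ × ℝ, Pa = α • Qa + x → Pa - c = α • (Qa - c) := by
      intro Pa Qa ha
      linear_combination (norm := module) ha - hcx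
    have hR1 := hRrel P₁ Q₁ hQ1
    have hQP : ∀ Pa Qa : ℝ × ℝ, Pa - c = α • (Qa - c) → Qa - Pa = (1/α - 1) • (Pa - c) := by
      intro Pa Qa hRa
      have h2 : α • (Qa - Pa) = α • ((1/α - 1) • (Pa - c)) := by
        rw [smul_smul, show α * (1/α - 1) = 1 - α from by field_simp]
      -- goal : α • (Qa - Pa) = (1 - α) • (Pa - c)
        linear_combination (norm := module) -hRa
      exact smul_right_injective _ hα0 h2
    have hlparam : ∀ Pa Qa : ℝ × ℝ, Pa - c = α • (Qa - c) → ∀ ρ : ℝ, ∀ z : ℝ × ℝ,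
        z - c = ρ • (Pa - c) → z = Pa + ((ρ - 1)/(1/α - 1)) • (Qa - Pa) := by
      intro Pa Qa hRa ρ z hz
      rw [hQP Pa Qa hRa, smul_smul, div_mul_cancel₀ _ hinv1]
      linear_combination (norm := module) hz
    have hcK : c ∉ K := by
      intro hcK
      have hct : c = P₁ + ((0 - 1)/(1/α - 1)) • (Q₁ - P₁) :=
        hlparam P₁ Q₁ hR1 0 c (by rw [zero_smul, sub_self])
      have h1 := hline1 c hcK ⟨_, hct⟩
      rw [segment_eq_image'] at h1
      obtain ⟨u, hu, hu'⟩ := h1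
      simp only [Set.mem_Icc] at hu
      dsimp only at hu'
      have hd0 : Q₁ - P₁ ≠ 0 := fun h => hne1 (sub_eq_zero.1 h).symm
      have e1 : (0 - 1)/(1/α - 1) = u := paru hd0 (hct.symm.trans hu'.symm)
      rcases lt_or_gt_of_ne hα1 with hlt | hgt
      · have hpos : 0 < 1/α - 1 := by
          have h2 : 1 < 1/α := by rw [lt_div_iff₀ hα]; linarith
          linarith
        have hneg : (0 - 1)/(1/α - 1) < 0 := div_neg_of_neg_of_pos (by norm_num) hpos
        linarith [hu.1]
      · have heq2 : (0 - 1)/(1/α - 1) = α/(α-1) := by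
          rw [div_eq_div_iff hinv1 (sub_ne_zero.2 (ne_of_gt hgt))]
          field_simp
          try ring
        have hgt1 : 1 < α/(α-1) := by
          rw [lt_div_iff₀ (by linarith : (0:ℝ) < α - 1)]
          linarith
        rw [heq2] at e1
        linarith [hu.2]
    obtain ⟨f, uf, hfc, hfK⟩ := geometric_hahn_banach_point_closed hK hcl hcK
    set w : ℝ × ℝ := (f (1,0), f (0,1)) with hwdef
    have hfw : ∀ y : ℝ × ℝ, f y = w.1 * y.1 + w.2 * y.2 := by
      intro y
      have hy : y = y.1 • ((1:ℝ),(0:ℝ)) + y.2 • ((0:ℝ),(1:ℝ)) := by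
        apply Prod.ext <;> simp
      conv_lhs => rw [hy]
      rw [map_add, map_smul, map_smul, smul_eq_mul, smul_eq_mul, hwdef]
      dsimp only
      ring
    have hSpos : ∀ y ∈ K, 0 < w.1*(y.1-c.1) + w.2*(y.2-c.2) := by
      intro y hy
      have h1 := hfK y hy
      have h2 := hfw y
      have h3 := hfw c
      have h4 : w.1*(y.1-c.1) + w.2*(y.2-c.2)
          = (w.1*y.1 + w.2*y.2) - (w.1*c.1 + w.2*c.2) := by ring
      rw [h4, ← h2, ← h3]
      linarith
    have hw0 : w ≠ 0 := by
      intro h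
      have h1 := hSpos P₁ hP1K
      rw [h] at h1
      simp at h1
    set tau : ℝ × ℝ → ℝ :=
      fun P => (-w.2*(P.1-c.1) + w.1*(P.2-c.2)) / (w.1*(P.1-c.1) + w.2*(P.2-c.2)) with htaudef
    have hkey : ∀ Pa Qa Pb Qb : ℝ × ℝ, Pa = α • Qa + x → Pb = α • Qb + x →
        (∀ z ∈ K, (∃ t : ℝ, z = Pa + t • (Qa - Pa)) → z ∈ segment ℝ Pa Qa) →
        Pa ∈ K → Pb ∈ K → Qb ∈ K → ∀ ρ : ℝ, 0 < ρ → Pb - c = ρ • (Pa - c) →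
        ρ ≤ 1 ∧ (ρ = 1 → Pb = Pa) := by
      intro Pa Qa Pb Qb ha hb hlinea hPaK hPbK hQbK ρ hρ hRb
      have hRa := hRrel Pa Qa ha
      have hRbrel := hRrel Pb Qb hb
      have hRa0 : Pa - c ≠ 0 := by
        intro h
        exact hcK (by rw [← sub_eq_zero.1 h]; exact hPaK)
      have hd0 : Qa - Pa ≠ 0 := by
        rw [hQP Pa Qa hRa]
        exact smul_ne_zero hinv1 hRa0
      have hPbeq := hlparam Pa Qa hRa ρ Pb hRb
      have h1 := hlinea Pb hPbK ⟨_, hPbeq⟩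
      rw [segment_eq_image'] at h1
      obtain ⟨u, hu, hu'⟩ := h1
      simp only [Set.mem_Icc] at hu
      dsimp only at hu'
      have e1 : (ρ - 1)/(1/α - 1) = u := paru hd0 (hPbeq.symm.trans hu'.symm)
      have hQbc : Qb - c = (ρ/α) • (Pa - c) := by
        have h2 : α • (Qb - c) = α • ((ρ/α) • (Pa - c)) := by
          rw [smul_smul, mul_div_cancel₀ _ hα0, ← hRbrel]
          exact hRb
        exact smul_right_injective _ hα0 h2
      have hQbeq := hlparam Pa Qa hRa (ρ/α) Qb hQbc
      have h2 := hlinea Qb hQbK ⟨_, hQbeq⟩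
      rw [segment_eq_image'] at h2
      obtain ⟨u', hu2, hu2'⟩ := h2
      simp only [Set.mem_Icc] at hu2
      dsimp only at hu2'
      have e2 : (ρ/α - 1)/(1/α - 1) = u' := paru hd0 (hQbeq.symm.trans hu2'.symm)
      have hsc : u' - u = ρ := by
        rw [← e1, ← e2]
        field_simp
        ring
      constructor
      · linarith [hu.1, hu2.2]
      · intro hρ1
        have hu0 : u = 0 := by rw [← e1, hρ1]; simp
        rw [hPbeq, e1, hu0]
        simp
    have hdist : ∀ Pa Qa Pb Qb : ℝ × ℝ, Pa = α • Qa + x → Pb = α • Qb + x →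
        (∀ z ∈ K, (∃ t : ℝ, z = Pa + t • (Qa - Pa)) → z ∈ segment ℝ Pa Qa) →
        (∀ z ∈ K, (∃ t : ℝ, z = Pb + t • (Qb - Pb)) → z ∈ segment ℝ Pb Qb) →
        Pa ∈ K → Qa ∈ K → Pb ∈ K → Qb ∈ K → Pa ≠ Pb → tau Pa ≠ tau Pb := by
      intro Pa Qa Pb Qb ha hb hla hlb hPaK hQaK hPbK hQbK hab heq
      have hSa := hSpos Pa hPaK
      have hSb := hSpos Pb hPbK
      obtain ⟨sa, hsa⟩ : ∃ r:ℝ, w.1*(Pa.1-c.1) + w.2*(Pa.2-c.2) = r := ⟨_, rfl⟩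
      obtain ⟨sb, hsb⟩ : ∃ r:ℝ, w.1*(Pb.1-c.1) + w.2*(Pb.2-c.2) = r := ⟨_, rfl⟩
      obtain ⟨ta, hta⟩ : ∃ r:ℝ, -w.2*(Pa.1-c.1) + w.1*(Pa.2-c.2) = r := ⟨_, rfl⟩
      obtain ⟨tb, htb⟩ : ∃ r:ℝ, -w.2*(Pb.1-c.1) + w.1*(Pb.2-c.2) = r := ⟨_, rfl⟩
      rw [hsa] at hSa
      rw [hsb] at hSb
      simp only [htaudef] at heq
      rw [hsa, hsb, hta, htb] at heq
      have hsa0 : sa ≠ 0 := ne_of_gt hSa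
      have hsb0 : sb ≠ 0 := ne_of_gt hSb
      have hz : Pb - c = (sb/sa) • (Pa - c) := by
        apply sub_eq_zero.1
        apply plane1 hw0
        · have expand : w.1*((Pb - c) - (sb/sa) • (Pa - c)).1 + w.2*((Pb - c) - (sb/sa) • (Pa - c)).2
              = (w.1*(Pb.1-c.1) + w.2*(Pb.2-c.2)) - (sb/sa)*(w.1*(Pa.1-c.1) + w.2*(Pa.2-c.2)) := by
            simp only [Prod.fst_sub, Prod.snd_sub, Prod.smul_fst, Prod.smul_snd, smul_eq_mul]
            ring
          rw [expand, hsa, hsb]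
          field_simp; ring
        · have expand : -w.2*((Pb - c) - (sb/sa) • (Pa - c)).1 + w.1*((Pb - c) - (sb/sa) • (Pa - c)).2
              = (-w.2*(Pb.1-c.1) + w.1*(Pb.2-c.2)) - (sb/sa)*(-w.2*(Pa.1-c.1) + w.1*(Pa.2-c.2)) := by
            simp only [Prod.fst_sub, Prod.snd_sub, Prod.smul_fst, Prod.smul_snd, smul_eq_mul]
            ring
          rw [expand, hta, htb]
          field_simp at heq ⊢
          linear_combination -heq
      have hz' : Pa - c = (sa/sb) • (Pb - c) := by
        rw [hz, smul_smul, show sa/sb*(sb/sa) = 1 from by field_simp, one_smul]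
      have hρ1 : 0 < sb/sa := div_pos hSb hSa
      have hρ2 : 0 < sa/sb := div_pos hSa hSb
      obtain ⟨l1, l2⟩ := hkey Pa Qa Pb Qb ha hb hla hPaK hPbK hQbK (sb/sa) hρ1 hz
      obtain ⟨l1', _⟩ := hkey Pb Qb Pa Qa hb ha hlb hPbK hPaK hQaK (sa/sb) hρ2 hz'
      have hsab : sb/sa = 1 := by
        rw [div_le_one hSa] at l1
        rw [div_le_one hSb] at l1'
        rw [div_eq_one_iff_eq hsa0]
        linarith
      exact hab (l2 hsab).symm
    have hcore : ∀ Pi Qi Pj Qj Pk Qk : ℝ × ℝ,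
        Pi = α • Qi + x → Pj = α • Qj + x → Pk = α • Qk + x →
        Pi ∈ K → Pj ∈ K → Pk ∈ K → Qi ∈ K → Qk ∈ K → Pj ∈ frontier K → Pj ≠ Qj →
        (∀ z ∈ K, (∃ t : ℝ, z = Pj + t • (Qj - Pj)) → z ∈ segment ℝ Pj Qj) →
        tau Pi < tau Pj → tau Pj < tau Pk →
        (∃ A B : ℝ × ℝ, A ≠ B ∧ Pj ∈ segment ℝ A B ∧ segment ℝ A B ⊆ frontier K) := by
      intro Pi Qi Pj Qj Pk Qk hi hj hk hPiK hPjK hPkK hQiK hQkK hPjf hPQj hlinej hij hjk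
      have hSi := hSpos Pi hPiK
      have hSj := hSpos Pj hPjK
      have hSk := hSpos Pk hPkK
      obtain ⟨si, hsi⟩ : ∃ r:ℝ, w.1*(Pi.1-c.1) + w.2*(Pi.2-c.2) = r := ⟨_, rfl⟩
      obtain ⟨sj, hsj⟩ : ∃ r:ℝ, w.1*(Pj.1-c.1) + w.2*(Pj.2-c.2) = r := ⟨_, rfl⟩
      obtain ⟨sk, hsk⟩ : ∃ r:ℝ, w.1*(Pk.1-c.1) + w.2*(Pk.2-c.2) = r := ⟨_, rfl⟩
      obtain ⟨ti, hti⟩ : ∃ r:ℝ, -w.2*(Pi.1-c.1) + w.1*(Pi.2-c.2) = r := ⟨_, rfl⟩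
      obtain ⟨tj, htj⟩ : ∃ r:ℝ, -w.2*(Pj.1-c.1) + w.1*(Pj.2-c.2) = r := ⟨_, rfl⟩
      obtain ⟨tk, htk⟩ : ∃ r:ℝ, -w.2*(Pk.1-c.1) + w.1*(Pk.2-c.2) = r := ⟨_, rfl⟩
      rw [hsi] at hSi
      rw [hsj] at hSj
      rw [hsk] at hSk
      simp only [htaudef] at hij hjk
      rw [hsi, hsj, hti, htj] at hij
      rw [hsj, hsk, htj, htk] at hjk
      have hsi0 : si ≠ 0 := ne_of_gt hSi
      have hsj0 : sj ≠ 0 := ne_of_gt hSj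
      have hsk0 : sk ≠ 0 := ne_of_gt hSk
      have hik : ti/si < tk/sk := lt_trans hij hjk
      have hik0 : tk/sk - ti/si ≠ 0 := ne_of_gt (by linarith)
      obtain ⟨lam, hlamdef⟩ : ∃ r:ℝ, r = (tk/sk - tj/sj)/(tk/sk - ti/si) := ⟨_, rfl⟩
      have hlam0 : 0 < lam := hlamdef ▸ div_pos (by linarith) (by linarith)
      have hlam1 : lam < 1 := by rw [hlamdef, div_lt_one (by linarith)]; linarith
      obtain ⟨E, hEdef⟩ : ∃ r:ℝ, r = lam*sk + (1-lam)*si := ⟨_, rfl⟩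
      have hE0 : 0 < E := by
        rw [hEdef]
        have d1 : 0 < lam*sk := mul_pos hlam0 hSk
        have d2 : 0 < (1-lam)*si := mul_pos (by linarith) hSi
        linarith
      have hE0' : E ≠ 0 := ne_of_gt hE0
      obtain ⟨rm, hrmdef⟩ : ∃ r:ℝ, r = si*sk/E := ⟨_, rfl⟩
      have hrm0 : 0 < rm := hrmdef ▸ div_pos (mul_pos hSi hSk) hE0
      obtain ⟨mu, hmudef⟩ : ∃ r:ℝ, r = sk*lam/E := ⟨_, rfl⟩
      have hmu0 : 0 < mu := hmudef ▸ div_pos (mul_pos hSk hlam0) hE0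
      have hmui : mu*si = rm*lam := by rw [hmudef, hrmdef]; field_simp
      have hmuk : (1-mu)*sk = rm*(1-lam) := by
        rw [hmudef, hrmdef, one_sub_div hE0', hEdef]
        ring
      have hmu1 : mu < 1 := by
        rw [hmudef, div_lt_one hE0, hEdef]
        have h3 : 0 < (1-lam)*si := mul_pos (by linarith) hSi
        linarith
      have htauj : lam*(ti/si) + (1-lam)*(tk/sk) = tj/sj := by
        rw [hlamdef]
        exact scal _ _ _ hij hjk
      -- the crossing point m
      have hmc : (mu • Pi + (1-mu) • Pk) - c = (rm/sj) • (Pj - c) := by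
        apply sub_eq_zero.1
        apply plane1 hw0
        · have expand : w.1*(((mu • Pi + (1-mu) • Pk) - c - (rm/sj) • (Pj - c)).1)
              + w.2*(((mu • Pi + (1-mu) • Pk) - c - (rm/sj) • (Pj - c)).2)
              = mu*(w.1*(Pi.1-c.1) + w.2*(Pi.2-c.2)) + (1-mu)*(w.1*(Pk.1-c.1) + w.2*(Pk.2-c.2))
                - (rm/sj)*(w.1*(Pj.1-c.1) + w.2*(Pj.2-c.2)) := by
            simp only [Prod.fst_sub, Prod.snd_sub, Prod.fst_add, Prod.snd_add,
              Prod.smul_fst, Prod.smul_snd, smul_eq_mul]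
            ring
          rw [expand, hsi, hsj, hsk]
          rw [show mu*si + (1-mu)*sk - rm/sj*sj = mu*si + (1-mu)*sk - rm from by field_simp]
          rw [hmui, hmuk]
          ring
        · have expand : -w.2*(((mu • Pi + (1-mu) • Pk) - c - (rm/sj) • (Pj - c)).1)
              + w.1*(((mu • Pi + (1-mu) • Pk) - c - (rm/sj) • (Pj - c)).2)
              = mu*(-w.2*(Pi.1-c.1) + w.1*(Pi.2-c.2)) + (1-mu)*(-w.2*(Pk.1-c.1) + w.1*(Pk.2-c.2))
                - (rm/sj)*(-w.2*(Pj.1-c.1) + w.1*(Pj.2-c.2)) := by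
            simp only [Prod.fst_sub, Prod.snd_sub, Prod.fst_add, Prod.snd_add,
              Prod.smul_fst, Prod.smul_snd, smul_eq_mul]
            ring
          rw [expand, hti, htj, htk]
          have e1 : mu*ti = rm*lam*(ti/si) := by rw [← hmui]; field_simp; try ring
          have e2 : (1-mu)*tk = rm*(1-lam)*(tk/sk) := by rw [← hmuk]; field_simp; try ring
          have e3 : (rm/sj)*tj = rm*(tj/sj) := by field_simp; try ring
          rw [e1, e2, e3, ← htauj]
          ring
      have hRj := hRrel Pj Qj hj
      have hmline := hlparam Pj Qj hRj (rm/sj) (mu • Pi + (1-mu) • Pk) hmc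
      have hikP : Pi ≠ Pk := by
        intro h
        rw [h] at hsi hti
        have hsik : si = sk := hsi.symm.trans hsk
        have htik : ti = tk := hti.symm.trans htk
        rw [hsik, htik] at hik
        exact lt_irrefl _ hik
      exact lemFINISH hK hα hi hj hk hPiK hPkK hQiK hQkK hPjf hPQj hlinej hikP hmu0 hmu1
        ⟨_, hmline⟩
    have hd12 := hdist P₁ Q₁ P₂ Q₂ hQ1 hQ2 hline1 hline2 hP1K hQ1K hP2K hQ2K h12
    have hd13 := hdist P₁ Q₁ P₃ Q₃ hQ1 hQ3 hline1 hline3 hP1K hQ1K hP3K hQ3K h13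
    have hd23 := hdist P₂ Q₂ P₃ Q₃ hQ2 hQ3 hline2 hline3 hP2K hQ2K hP3K hQ3K h23
    rcases (lt_or_gt_of_ne hd12) with h12' | h12'
    · rcases (lt_or_gt_of_ne hd23) with h23' | h23'
      · exact hgoal P₂ (by simp) (hcore P₁ Q₁ P₂ Q₂ P₃ Q₃ hQ1 hQ2 hQ3 hP1K hP2K hP3K hQ1K hQ3K hP2f hne2 hline2 h12' h23')
      · rcases (lt_or_gt_of_ne hd13) with h13' | h13'
        · exact hgoal P₃ (by simp) (hcore P₁ Q₁ P₃ Q₃ P₂ Q₂ hQ1 hQ3 hQ2 hP1K hP3K hP2K hQ1K hQ2K hP3f hne3 hline3 h13' h23')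
        · exact hgoal P₁ (by simp) (hcore P₃ Q₃ P₁ Q₁ P₂ Q₂ hQ3 hQ1 hQ2 hP3K hP1K hP2K hQ3K hQ2K hP1f hne1 hline1 h13' h12')
    · rcases (lt_or_gt_of_ne hd13) with h13' | h13'
      · exact hgoal P₁ (by simp) (hcore P₂ Q₂ P₁ Q₁ P₃ Q₃ hQ2 hQ1 hQ3 hP2K hP1K hP3K hQ2K hQ3K hP1f hne1 hline1 h12' h13')
      · rcases (lt_or_gt_of_ne hd23) with h23' | h23'
        · exact hgoal P₃ (by simp) (hcore P₂ Q₂ P₃ Q₃ P₁ Q₁ hQ2 hQ3 hQ1 hP2K hP3K hP1K hQ2K hQ1K hP3f hne3 hline3 h23' h13')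
        · exact hgoal P₂ (by simp) (hcore P₃ Q₃ P₂ Q₂ P₁ Q₁ hQ3 hQ2 hQ1 hP3K hP2K hP1K hQ3K hQ1K hP2f hne2 hline2 h23' h12')
end

section
/- Let K ⊂ ℝ² be a convex body with boundary Γ, α > 0, and x ∈ ℝ² with x ≠ 0. Then Γ ∩ (αΓ + x) cannot contain three line segments such that no two of them lie on one straight line. -/
def sdot (p q : ℝ × ℝ) : ℝ := p.1 * q.1 + p.2 * q.2

lemma stmt6_norm_pos {u : ℝ × ℝ} (hu : u ≠ 0) : 0 < u.1 ^ 2 + u.2 ^ 2 := by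
  have h : u.1 ≠ 0 ∨ u.2 ≠ 0 := by
    by_contra hc
    push_neg at hc
    exact hu (Prod.ext hc.1 hc.2)
  rcases h with h | h <;> positivity

lemma stmt6_collinear (u : ℝ × ℝ) (hu : u ≠ 0) (r : ℝ) (s : Set (ℝ × ℝ))
    (h : ∀ p ∈ s, p.1 * u.1 + p.2 * u.2 = r) : Collinear ℝ s := by
  have hn := stmt6_norm_pos hu
  rw [collinear_iff_exists_forall_eq_smul_vadd]
  refine ⟨(r / (u.1 ^ 2 + u.2 ^ 2)) • u, (-u.2, u.1), fun p hp => ?_⟩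
  refine ⟨(p.2 * u.1 - p.1 * u.2) / (u.1 ^ 2 + u.2 ^ 2), ?_⟩
  have hpu := h p hp
  rw [Prod.ext_iff]
  simp only [vadd_eq_add, Prod.fst_add, Prod.snd_add, Prod.smul_fst, Prod.smul_snd,
    smul_eq_mul]
  constructor
  · field_simp
    linear_combination u.1 * hpu
  · field_simp
    linear_combination u.2 * hpu

lemma stmt6_cross (w u v : ℝ × ℝ) (hw : w ≠ 0)
    (h1 : w.1 * u.1 + w.2 * u.2 = 0) (h2 : w.1 * v.1 + w.2 * v.2 = 0) :
    u.1 * v.2 - u.2 * v.1 = 0 := by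
  have h : w.1 ≠ 0 ∨ w.2 ≠ 0 := by
    by_contra hc
    push_neg at hc
    exact hw (Prod.ext hc.1 hc.2)
  rcases h with h | h
  · have key : w.1 * (u.1 * v.2 - u.2 * v.1) = 0 := by linear_combination v.2 * h1 - u.2 * h2
    exact (mul_eq_zero.mp key).resolve_left h
  · have key : w.2 * (u.1 * v.2 - u.2 * v.1) = 0 := by linear_combination u.1 * h2 - v.1 * h1
    exact (mul_eq_zero.mp key).resolve_left h

lemma stmt6_smul (u v : ℝ × ℝ) (hu : u ≠ 0) (hc : u.1 * v.2 - u.2 * v.1 = 0) :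
    v = ((u.1 * v.1 + u.2 * v.2) / (u.1 ^ 2 + u.2 ^ 2)) • u := by
  have hn := stmt6_norm_pos hu
  rw [Prod.ext_iff]
  simp only [Prod.smul_fst, Prod.smul_snd, smul_eq_mul]
  constructor
  · field_simp
    linear_combination (-u.2) * hc
  · field_simp
    linear_combination u.1 * hc

lemma stmt6_support (S : Set (ℝ × ℝ)) (hS : Convex ℝ S) (hcl : IsClosed S)
    (hint : (interior S).Nonempty) (m : ℝ × ℝ) (hm : m ∈ frontier S) :
    ∃ u : ℝ × ℝ, u ≠ 0 ∧ ∀ y ∈ S, sdot y u ≤ sdot m u := by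
  have hmi : m ∉ interior S := by
    rw [hcl.frontier_eq] at hm
    exact hm.2
  obtain ⟨f, hf⟩ := geometric_hahn_banach_open_point hS.interior isOpen_interior hmi
  set u : ℝ × ℝ := (f (1, 0), f (0, 1)) with hudef
  have key : ∀ p : ℝ × ℝ, f p = sdot p u := by
    intro p
    have hp : f p = f (p.1 • ((1 : ℝ), (0 : ℝ)) + p.2 • ((0 : ℝ), (1 : ℝ))) := by
      congr 1
      ext <;> simp
    rw [hp, map_add, map_smul, map_smul]
    simp [sdot, hudef]
  obtain ⟨z, hz⟩ := hint
  have hfz : f z < f m := hf z hz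
  have hu0 : u ≠ 0 := by
    intro h0
    rw [key z, key m, h0] at hfz
    simp [sdot] at hfz
  refine ⟨u, hu0, fun y hy => ?_⟩
  rw [← key y, ← key m]
  by_contra hlt
  push_neg at hlt
  set t : ℝ := (f y - f m) / (2 * (f y - f z)) with htdef
  have hyz : 0 < f y - f z := by linarith
  have hym : 0 < f y - f m := by linarith
  have ht0 : 0 < t := by positivity
  have ht1 : t ≤ 1 := by
    rw [div_le_one (by linarith)]
    linarith
  have hmem := hS.add_smul_sub_mem_interior hy hz ⟨ht0, ht1⟩
  have hlt2 := hf _ hmem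
  have hfe : f (y + t • (z - y)) = f y + t * (f z - f y) := by
    rw [map_add, map_smul, map_sub, smul_eq_mul]
  rw [hfe] at hlt2
  have htv : t * (f y - f z) = (f y - f m) / 2 := by
    rw [htdef]
    field_simp
  nlinarith

/-- Let `K ⊆ ℝ²` be a convex body with boundary `Γ`, `α > 0`, `x ≠ 0`. Then
`Γ ∩ (αΓ + x)` cannot contain three line segments such that no two of them lie
on one straight line. -/
theorem stmt_6 (K : Set (ℝ × ℝ)) (hK : Convex ℝ K) (hcomp : IsCompact K)
    (hint : (interior K).Nonempty) (α : ℝ) (hα : 0 < α) (x : ℝ × ℝ) (hx : x ≠ 0)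
    (A B : Fin 3 → ℝ × ℝ) (hne : ∀ i, A i ≠ B i)
    (hseg : ∀ i, segment ℝ (A i) (B i) ⊆
      frontier K ∩ ((fun y => α • y + x) '' frontier K))
    (hnocol : ∀ i j, i ≠ j → ¬ Collinear ℝ ({A i, B i, A j, B j} : Set (ℝ × ℝ))) :
    False := by
  classical
  have hclosed : IsClosed K := hcomp.isClosed
  have hfroK : frontier K ⊆ K := hclosed.frontier_subset
  set e : (ℝ × ℝ) ≃ₜ (ℝ × ℝ) :=
    (Homeomorph.smulOfNeZero α hα.ne').trans (Homeomorph.addRight x) with hedef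
  have he_app : ∀ y : ℝ × ℝ, e y = α • y + x := fun y => rfl
  have himage : ∀ s : Set (ℝ × ℝ), (fun y => α • y + x) '' s = e '' s := by
    intro s
    apply Set.image_congr
    intro y _
    exact (he_app y).symm
  set K' : Set (ℝ × ℝ) := (fun y => α • y + x) '' K with hK'def
  have hK'conv : Convex ℝ K' := by
    rintro p ⟨y1, hy1, rfl⟩ q ⟨y2, hy2, rfl⟩ a b ha hb hab
    refine ⟨a • y1 + b • y2, hK hy1 hy2 ha hb hab, ?_⟩
    have hcombo : a • (α • y1 + x) + b • (α • y2 + x) = α • (a • y1 + b • y2) + (a + b) • x := by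
      module
    simp only [hcombo, hab, one_smul]
  have hcont : Continuous fun y : ℝ × ℝ => α • y + x := by continuity
  have hK'cl : IsClosed K' := (hcomp.image hcont).isClosed
  have hK'int : (interior K').Nonempty := by
    obtain ⟨z, hz⟩ := hint
    refine ⟨e z, ?_⟩
    rw [hK'def, himage, ← e.image_interior]
    exact Set.mem_image_of_mem _ hz
  have hfroK'eq : frontier K' = (fun y => α • y + x) '' frontier K := by
    rw [hK'def, himage, ← e.image_frontier, himage]
  -- membership facts
  have hAfr : ∀ i, A i ∈ frontier K ∩ ((fun y => α • y + x) '' frontier K) :=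
    fun i => hseg i (left_mem_segment ℝ (A i) (B i))
  have hBfr : ∀ i, B i ∈ frontier K ∩ ((fun y => α • y + x) '' frontier K) :=
    fun i => hseg i (right_mem_segment ℝ (A i) (B i))
  have hAK : ∀ i, A i ∈ K := fun i => hfroK (hAfr i).1
  have hBK : ∀ i, B i ∈ K := fun i => hfroK (hBfr i).1
  have hAK' : ∀ i, A i ∈ K' := fun i => (Set.image_mono hfroK) (hAfr i).2
  have hBK' : ∀ i, B i ∈ K' := fun i => (Set.image_mono hfroK) (hBfr i).2
  -- the key per-index construction
  have main : ∀ i, ∃ u : ℝ × ℝ, u ≠ 0 ∧ (∀ y ∈ K, sdot y u ≤ sdot (A i) u) ∧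
      sdot (B i) u = sdot (A i) u ∧ sdot x u = (1 - α) * sdot (A i) u := by
    intro i
    set m : ℝ × ℝ := (1 / 2 : ℝ) • (A i + B i) with hmdef
    have hmseg : m ∈ segment ℝ (A i) (B i) :=
      ⟨1 / 2, 1 / 2, by norm_num, by norm_num, by norm_num, (smul_add _ _ _).symm⟩
    have hmfr := hseg i hmseg
    obtain ⟨u, hu0, hule⟩ := stmt6_support K hK hclosed hint m hmfr.1
    obtain ⟨v, hv0, hvle⟩ := stmt6_support K' hK'conv hK'cl hK'int m
      (by rw [hfroK'eq]; exact hmfr.2)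
    have hmdot : ∀ w : ℝ × ℝ, sdot m w = (sdot (A i) w + sdot (B i) w) / 2 := by
      intro w
      simp only [hmdef, sdot, Prod.smul_fst, Prod.smul_snd, Prod.fst_add, Prod.snd_add,
        smul_eq_mul]
      ring
    have hAu : sdot (A i) u = sdot m u := by
      have h1 := hule _ (hAK i); have h2 := hule _ (hBK i); have h3 := hmdot u; linarith
    have hBu : sdot (B i) u = sdot m u := by
      have h1 := hule _ (hAK i); have h2 := hule _ (hBK i); have h3 := hmdot u; linarith
    have hAv : sdot (A i) v = sdot m v := by
      have h1 := hvle _ (hAK' i); have h2 := hvle _ (hBK' i); have h3 := hmdot v; linarith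
    have hBv : sdot (B i) v = sdot m v := by
      have h1 := hvle _ (hAK' i); have h2 := hvle _ (hBK' i); have h3 := hmdot v; linarith
    -- the difference vector is orthogonal to both u and v
    have hw0 : B i - A i ≠ 0 := sub_ne_zero_of_ne (hne i).symm
    have hwu : (B i - A i).1 * u.1 + (B i - A i).2 * u.2 = 0 := by
      have h : sdot (B i) u = sdot (A i) u := by rw [hAu, hBu]
      simp only [sdot] at h
      simp only [Prod.fst_sub, Prod.snd_sub]
      linarith
    have hwv : (B i - A i).1 * v.1 + (B i - A i).2 * v.2 = 0 := by
      have h : sdot (B i) v = sdot (A i) v := by rw [hAv, hBv]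
      simp only [sdot] at h
      simp only [Prod.fst_sub, Prod.snd_sub]
      linarith
    have hcross := stmt6_cross _ u v hw0 hwu hwv
    set t : ℝ := (u.1 * v.1 + u.2 * v.2) / (u.1 ^ 2 + u.2 ^ 2) with htdef
    have hveq : v = t • u := stmt6_smul u v hu0 hcross
    have ht0 : t ≠ 0 := by
      intro h0
      apply hv0
      rw [hveq, h0, zero_smul]
    have hsm : ∀ p : ℝ × ℝ, sdot p v = t * sdot p u := by
      intro p
      rw [hveq]
      simp only [sdot, Prod.smul_fst, Prod.smul_snd, smul_eq_mul]
      ring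
    rcases ht0.lt_or_gt with htneg | htpos
    · -- K and K' on opposite sides: everything collinear, contradiction
      exfalso
      have online : ∀ p ∈ ({A 0, B 0, A 1, B 1} : Set (ℝ × ℝ)),
          p.1 * u.1 + p.2 * u.2 = sdot m u := by
        intro p hp
        have hpfr : p ∈ frontier K ∩ ((fun y => α • y + x) '' frontier K) := by
          simp only [Set.mem_insert_iff, Set.mem_singleton_iff] at hp
          rcases hp with rfl | rfl | rfl | rfl
          exacts [hAfr 0, hBfr 0, hAfr 1, hBfr 1]
        have h1 : sdot p u ≤ sdot m u := hule p (hfroK hpfr.1)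
        have h2 : sdot p v ≤ sdot m v := hvle p ((Set.image_mono hfroK) hpfr.2)
        rw [hsm p, hsm m] at h2
        have h3 : sdot m u ≤ sdot p u := by nlinarith
        have : sdot p u = sdot m u := le_antisymm h1 h3
        simpa [sdot] using this
      exact hnocol 0 1 (by decide) (stmt6_collinear u hu0 (sdot m u) _ online)
    · -- same side: extract the support-function relation
      refine ⟨u, hu0, ?_, by rw [hAu, hBu], ?_⟩
      · intro y hy
        rw [hAu]
        exact hule y hy
      · have hstep : ∀ y ∈ K, α * sdot y u + sdot x u ≤ sdot (A i) u := by
          intro y hy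
          have hyK' : α • y + x ∈ K' := ⟨y, hy, rfl⟩
          have h2 := hvle _ hyK'
          rw [hsm, hsm] at h2
          have h3 : sdot (α • y + x) u ≤ sdot m u := le_of_mul_le_mul_left h2 htpos
          have h4 : sdot (α • y + x) u = α * sdot y u + sdot x u := by
            simp only [sdot, Prod.fst_add, Prod.snd_add, Prod.smul_fst, Prod.smul_snd,
              smul_eq_mul]
            ring
          rw [h4] at h3
          rw [hAu]
          exact h3
        obtain ⟨y0, hy0fr, hy0eq⟩ := (hAfr i).2
        have hy0K : y0 ∈ K := hfroK hy0fr
        have h5 : α * sdot y0 u + sdot x u = sdot (A i) u := by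
          rw [← hy0eq]
          simp only [sdot, Prod.fst_add, Prod.snd_add, Prod.smul_fst, Prod.smul_snd,
            smul_eq_mul]
          ring
        have h6 := hstep (A i) (hAK i)
        have h7 : sdot y0 u ≤ sdot (A i) u := by
          rw [hAu]
          exact hule y0 hy0K
        nlinarith
  choose u hu0 hKle hBA hxrel using main
  set c : Fin 3 → ℝ := fun i => sdot (A i) (u i) with hcdef
  -- same-line contradiction helper
  have online_contra : ∀ i j, i ≠ j →
      (∀ p ∈ ({A i, B i, A j, B j} : Set (ℝ × ℝ)), p.1 * (u i).1 + p.2 * (u i).2 = c i) →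
      False := fun i j hij h => hnocol i j hij (stmt6_collinear _ (hu0 i) _ _ h)
  have hsmul_dot : ∀ (r : ℝ) (w p : ℝ × ℝ), sdot p (r • w) = r * sdot p w := by
    intro r w p
    simp only [sdot, Prod.smul_fst, Prod.smul_snd, smul_eq_mul]
    ring
  -- two parallel supporting lines with positively proportional normals coincide: contradiction
  have par_contra : ∀ i j, i ≠ j → ∀ r : ℝ, 0 < r → u j = r • u i → False := by
    intro i j hij r hr hrel
    have hsm : ∀ p : ℝ × ℝ, sdot p (u j) = r * sdot p (u i) := by
      intro p; rw [hrel, hsmul_dot]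
    have h1 : r * sdot (A j) (u i) = c j := by rw [← hsm]
    have h2 : sdot (A j) (u i) ≤ c i := hKle i _ (hAK j)
    have h3 : sdot (A i) (u j) ≤ c j := hKle j _ (hAK i)
    rw [hsm] at h3
    -- r * c i ≤ c j and r * (sdot A_j u_i) = c j with sdot A_j u_i ≤ c i forces equality
    have hceq : r * c i = c j := by nlinarith
    apply online_contra i j hij
    intro p hp
    simp only [Set.mem_insert_iff, Set.mem_singleton_iff] at hp
    have hBj : r * sdot (B j) (u i) = c j := by rw [← hsm]; exact hBA j
    rcases hp with rfl | rfl | rfl | rfl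
    · rfl
    · exact hBA i
    · have : sdot (A j) (u i) = c i := by
        apply mul_left_cancel₀ hr.ne'
        rw [h1, ← hceq]
      simpa [sdot] using this
    · have : sdot (B j) (u i) = c i := by
        apply mul_left_cancel₀ hr.ne'
        rw [hBj, ← hceq]
      simpa [sdot] using this
  by_cases hα1 : α = 1
  · -- translation case: all normals orthogonal to x, hence pairwise parallel
    have hperp : ∀ i, x.1 * (u i).1 + x.2 * (u i).2 = 0 := by
      intro i
      have h := hxrel i
      rw [hα1] at h
      simpa [sdot] using h
    have hcr : ∀ i j, (u i).1 * (u j).2 - (u i).2 * (u j).1 = 0 :=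
      fun i j => stmt6_cross x _ _ hx (hperp i) (hperp j)
    have hratio : ∀ i j : Fin 3, i ≠ j → ∃ r : ℝ, r < 0 ∧ u j = r • u i := by
      intro i j hij
      set r : ℝ := ((u i).1 * (u j).1 + (u i).2 * (u j).2) / ((u i).1 ^ 2 + (u i).2 ^ 2)
      have hr : u j = r • u i := stmt6_smul (u i) (u j) (hu0 i) (hcr i j)
      have hrne : r ≠ 0 := by
        intro h0
        apply hu0 j
        rw [hr, h0, zero_smul]
      rcases hrne.lt_or_gt with h | h
      · exact ⟨r, h, hr⟩
      · exact (par_contra i j hij r h hr).elim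
    obtain ⟨r1, hr1neg, hr1⟩ := hratio 0 1 (by decide)
    obtain ⟨r2, hr2neg, hr2⟩ := hratio 0 2 (by decide)
    have hu2 : u 2 = (r2 / r1) • u 1 := by
      rw [hr1, smul_smul, hr2]
      congr 1
      field_simp [hr1neg.ne]
    exact par_contra 1 2 (by decide) (r2 / r1)
      (div_pos_iff.2 (Or.inr ⟨hr2neg, hr1neg⟩)) hu2
  · -- genuine homothety: all lines pass through the fixed point cc
    have h1α : (1 : ℝ) - α ≠ 0 := fun h => hα1 (by linarith)
    set cc : ℝ × ℝ := (1 - α)⁻¹ • x with hccdef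
    have hccd : ∀ i, sdot cc (u i) = c i := by
      intro i
      have h := hxrel i
      have h2 : sdot cc (u i) = (1 - α)⁻¹ * sdot x (u i) := by
        simp only [hccdef, sdot, Prod.smul_fst, Prod.smul_snd, smul_eq_mul]
        ring
      rw [h2, h]
      field_simp
      rfl
    have hcr : ∀ i j, i ≠ j → (u i).1 * (u j).2 - (u i).2 * (u j).1 ≠ 0 := by
      intro i j hij h0
      set r : ℝ := ((u i).1 * (u j).1 + (u i).2 * (u j).2) / ((u i).1 ^ 2 + (u i).2 ^ 2)
      have hr : u j = r • u i := stmt6_smul (u i) (u j) (hu0 i) h0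
      have hrne : r ≠ 0 := by
        intro hz
        apply hu0 j
        rw [hr, hz, zero_smul]
      have hsm : ∀ p : ℝ × ℝ, sdot p (u j) = r * sdot p (u i) := by
        intro p; rw [hr, hsmul_dot]
      have hcj : c j = r * c i := by rw [← hccd j, ← hccd i, hsm]
      apply online_contra i j hij
      intro p hp
      simp only [Set.mem_insert_iff, Set.mem_singleton_iff] at hp
      rcases hp with rfl | rfl | rfl | rfl
      · rfl
      · exact hBA i
      · have hAj : r * sdot (A j) (u i) = c j := by rw [← hsm]
        have : sdot (A j) (u i) = c i := by
          rw [hcj] at hAj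
          exact mul_left_cancel₀ hrne hAj
        simpa [sdot] using this
      · have hBj : r * sdot (B j) (u i) = c j := by rw [← hsm]; exact hBA j
        have : sdot (B j) (u i) = c i := by
          rw [hcj] at hBj
          exact mul_left_cancel₀ hrne hBj
        simpa [sdot] using this
    -- pick a point of each segment different from cc
    set a : Fin 3 → ℝ × ℝ := fun i => if A i = cc then B i else A i with hadef
    have haprop : ∀ i, a i ∈ K ∧ sdot (a i) (u i) = c i ∧ a i ≠ cc := by
      intro i
      by_cases h : A i = cc
      · refine ⟨by simp only [hadef, if_pos h]; exact hBK i,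
          by simp only [hadef, if_pos h]; exact hBA i, ?_⟩
        simp only [hadef, if_pos h]
        intro hB
        exact hne i (h.trans hB.symm)
      · exact ⟨by simp only [hadef, if_neg h]; exact hAK i,
          by simp only [hadef, if_neg h]; rfl, by simp only [hadef, if_neg h]; exact h⟩
    set d : Fin 3 → ℝ × ℝ := fun i => a i - cc with hddef
    have hd0 : ∀ i, d i ≠ 0 := fun i => sub_ne_zero_of_ne (haprop i).2.2
    have hdperp : ∀ i, (d i).1 * (u i).1 + (d i).2 * (u i).2 = 0 := by
      intro i
      have h1 := (haprop i).2.1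
      have h2 := hccd i
      simp only [sdot] at h1 h2
      simp only [hddef, Prod.fst_sub, Prod.snd_sub]
      linarith
    have hdneg : ∀ i j, i ≠ j → (d i).1 * (u j).1 + (d i).2 * (u j).2 < 0 := by
      intro i j hij
      have hle : sdot (a i) (u j) ≤ c j := hKle j _ (haprop i).1
      have hcc := hccd j
      have hne0 : (d i).1 * (u j).1 + (d i).2 * (u j).2 ≠ 0 := by
        intro h0
        exact hcr i j hij (stmt6_cross (d i) (u i) (u j) (hd0 i) (hdperp i) h0)
      have hle' : (d i).1 * (u j).1 + (d i).2 * (u j).2 ≤ 0 := by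
        simp only [sdot] at hle hcc
        simp only [hddef, Prod.fst_sub, Prod.snd_sub]
        linarith
      exact lt_of_le_of_ne hle' hne0
    set lam : Fin 3 → ℝ :=
      fun i => ((u i).1 * (d i).2 - (u i).2 * (d i).1) / ((u i).1 ^ 2 + (u i).2 ^ 2) with hlamdef
    have hlam : ∀ i j, (d i).1 * (u j).1 + (d i).2 * (u j).2 =
        lam i * ((u i).1 * (u j).2 - (u i).2 * (u j).1) := by
      intro i j
      have hn := stmt6_norm_pos (hu0 i)
      simp only [hlamdef]
      rw [div_mul_eq_mul_div, eq_div_iff hn.ne']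
      linear_combination ((u j).1 * (u i).1 + (u j).2 * (u i).2) * hdperp i
    have hpair : ∀ i j : Fin 3, i ≠ j → lam i * lam j < 0 := by
      intro i j hij
      have h1 := hdneg i j hij
      have h2 := hdneg j i hij.symm
      rw [hlam i j] at h1
      rw [hlam j i] at h2
      by_contra hge
      push_neg at hge
      nlinarith [mul_nonneg hge (sq_nonneg ((u i).1 * (u j).2 - (u i).2 * (u j).1))]
    have h01 := hpair 0 1 (by decide)
    have h02 := hpair 0 2 (by decide)
    have h12 := hpair 1 2 (by decide)
    nlinarith [mul_pos_of_neg_of_neg h01 h02, h12, sq_nonneg (lam 0 * lam 1 * lam 2)]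
end
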